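/- Let w ≥ 2 be an integer and D a minimal norm representatives digit set modulo τ^w. If τ^{w−1}·V + V + V ⊆ τ^w·int(V), where the left-hand side is the set of all sums τ^{w−1}·v₁ + v₂ + v₃ with v₁, v₂, v₃ ∈ V and int(V) denotes the interior of V, then D is w-subadditive. -/

import Mathlib

open Complex

noncomputable section

/-- The lattice `ℤ[τ] = {a + b·τ : a, b ∈ ℤ}` as a subset of `ℂ`. -/
def Ztau (τ : ℂ) : Set ℂ := {z | ∃ a b : ℤ, z = (a : ℂ) + (b : ℂ) * τ}

/-- `z` is divisible by `τ` in `ℤ[τ]`. -/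
def TauDvd (τ : ℂ) (z : ℂ) : Prop := ∃ y ∈ Ztau τ, z = τ * y

/-- `x` is a minimal norm representative modulo `τ^w`: an element of `ℤ[τ]`,
not divisible by `τ`, of minimal norm in its residue class modulo `τ^w`. -/
def MinNormRep (τ : ℂ) (w : ℕ) (x : ℂ) : Prop :=
  x ∈ Ztau τ ∧ ¬ TauDvd τ x ∧
    ∀ y ∈ Ztau τ, ‖x‖ ≤ ‖x - τ ^ w * y‖

/-- `D` is a minimal norm representatives digit set modulo `τ^w`. -/
def IsMinNormDigitSet (τ : ℂ) (w : ℕ) (D : Set ℂ) : Prop :=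
  D ⊆ Ztau τ ∧ (0 : ℂ) ∈ D ∧ (∀ d ∈ D, d ≠ 0 → MinNormRep τ w d) ∧
    ∀ z ∈ Ztau τ, ¬ TauDvd τ z →
      ∃! d, d ∈ D ∧ ∃ y ∈ Ztau τ, z - d = τ ^ w * y

/-- An expansion: a finitely supported sequence of digits. -/
def IsExpansion (D : Set ℂ) (η : ℕ →₀ ℂ) : Prop := ∀ n, η n ∈ D

/-- The `w`-NAF condition: any two distinct nonzero digits have indices at
distance at least `w`. -/
def IsWNAF (w : ℕ) (η : ℕ →₀ ℂ) : Prop :=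
  ∀ m n : ℕ, m ≠ n → η m ≠ 0 → η n ≠ 0 → (w : ℤ) ≤ |(m : ℤ) - (n : ℤ)|

/-- The value of an expansion in base `τ`: `∑ η_n · τ^n`. -/
def evalue (τ : ℂ) (η : ℕ →₀ ℂ) : ℂ := η.sum fun n d => d * τ ^ n

/-- The weight of an expansion: the number of nonzero digits. -/
def eweight (η : ℕ →₀ ℂ) : ℕ := η.support.card

/-- A multi-expansion over the digit set `D`: a finite multiset of pairs
`(d, n)` with `d ∈ D` nonzero. -/
def IsMultiExpansion (D : Set ℂ) (μ : Multiset (ℂ × ℕ)) : Prop :=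
  ∀ x ∈ μ, x.1 ∈ D ∧ x.1 ≠ 0

/-- The value of a multi-expansion in base `τ`: `∑ d · τ^n`. -/
def mvalue (τ : ℂ) (μ : Multiset (ℂ × ℕ)) : ℂ :=
  (μ.map fun x => x.1 * τ ^ x.2).sum

/-- The digit set `D` is `w`-subadditive: the sum of the values of two
singletons has a `w`-NAF-expansion of weight at most `2`. -/
def WSubadditive (τ : ℂ) (w : ℕ) (D : Set ℂ) : Prop :=
  ∀ c ∈ D, ∀ d ∈ D, c ≠ 0 → d ≠ 0 → ∀ m n : ℕ,
    ∃ η : ℕ →₀ ℂ, IsExpansion D η ∧ IsWNAF w η ∧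
      evalue τ η = τ ^ m * c + τ ^ n * d ∧ eweight η ≤ 2

/-- The Voronoi cell of `0` for the lattice `ℤ[τ]`. -/
def VoronoiCell (τ : ℂ) : Set ℂ :=
  {z | ∀ y ∈ Ztau τ, ‖z‖ ≤ ‖z - y‖}

section AuxLemmas

variable {p q : ℤ} {τ : ℂ}

lemma Ztau_mem (a b : ℤ) : ((a : ℂ) + (b : ℂ) * τ) ∈ Ztau τ := ⟨a, b, rfl⟩

lemma Ztau_zero : (0 : ℂ) ∈ Ztau τ := ⟨0, 0, by simp⟩

lemma Ztau_add {x y : ℂ} (hx : x ∈ Ztau τ) (hy : y ∈ Ztau τ) : x + y ∈ Ztau τ := by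
  obtain ⟨a, b, rfl⟩ := hx; obtain ⟨a', b', rfl⟩ := hy
  exact ⟨a + a', b + b', by push_cast; ring⟩

lemma Ztau_neg {x : ℂ} (hx : x ∈ Ztau τ) : -x ∈ Ztau τ := by
  obtain ⟨a, b, rfl⟩ := hx
  exact ⟨-a, -b, by push_cast; ring⟩

lemma Ztau_tau_mul (hroot : τ ^ 2 - (p : ℂ) * τ + (q : ℂ) = 0) {y : ℂ}
    (hy : y ∈ Ztau τ) : τ * y ∈ Ztau τ := by
  obtain ⟨a, b, rfl⟩ := hy
  exact ⟨-q * b, a + p * b, by push_cast; linear_combination (b : ℂ) * hroot⟩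

lemma Ztau_pow_mul (hroot : τ ^ 2 - (p : ℂ) * τ + (q : ℂ) = 0) (k : ℕ) {y : ℂ}
    (hy : y ∈ Ztau τ) : τ ^ k * y ∈ Ztau τ := by
  induction k with
  | zero => simpa using hy
  | succ k ih => rw [pow_succ', mul_assoc]; exact Ztau_tau_mul hroot ih

end AuxLemmas

section AuxLemmas2

variable {p q : ℤ} {τ : ℂ}

lemma tau_re_eq (hroot : τ ^ 2 - (p : ℂ) * τ + (q : ℂ) = 0) (him : τ.im ≠ 0) :
    2 * τ.re = (p : ℝ) := by
  have h := congrArg Complex.im hroot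
  simp [pow_two, Complex.add_im, Complex.sub_im, Complex.mul_im] at h
  have h2 : (2 * τ.re - (p : ℝ)) * τ.im = 0 := by linarith
  rcases mul_eq_zero.1 h2 with h3 | h3
  · linarith
  · exact absurd h3 him

lemma tau_normSq_eq (hroot : τ ^ 2 - (p : ℂ) * τ + (q : ℂ) = 0) (him : τ.im ≠ 0) :
    τ.re ^ 2 + τ.im ^ 2 = (q : ℝ) := by
  have h := congrArg Complex.re hroot
  simp [pow_two, Complex.add_re, Complex.sub_re, Complex.mul_re] at h
  have hp := tau_re_eq hroot him
  linear_combination (-1 : ℝ) * h + τ.re * hp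

lemma tau_ne_zero (him : τ.im ≠ 0) : τ ≠ 0 := by
  intro h; apply him; rw [h]; simp

/-- The norm of a lattice element is an integer. -/
lemma normSq_mem_int (hroot : τ ^ 2 - (p : ℂ) * τ + (q : ℂ) = 0) (him : τ.im ≠ 0)
    {z : ℂ} (hz : z ∈ Ztau τ) : ∃ k : ℤ, Complex.normSq z = (k : ℝ) := by
  obtain ⟨a, b, rfl⟩ := hz
  refine ⟨a ^ 2 + a * b * p + b ^ 2 * q, ?_⟩
  have hp := tau_re_eq hroot him
  have hq := tau_normSq_eq hroot him
  rw [Complex.normSq_apply]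
  simp [Complex.add_re, Complex.add_im, Complex.mul_re, Complex.mul_im]
  push_cast
  linear_combination ((a : ℝ) * b) * hp + ((b : ℝ) ^ 2) * hq

lemma V_zero : (0 : ℂ) ∈ VoronoiCell τ := by
  intro y hy; simp

lemma V_neg {v : ℂ} (hv : v ∈ VoronoiCell τ) : -v ∈ VoronoiCell τ := by
  intro y hy
  have := hv (-y) (Ztau_neg hy)
  calc ‖-v‖ = ‖v‖ := by simp
    _ ≤ ‖v - -y‖ := this
    _ = ‖-v - y‖ := by rw [show v - -y = -(-v - y) by ring, norm_neg]

lemma V_div (hroot : τ ^ 2 - (p : ℂ) * τ + (q : ℂ) = 0) (him : τ.im ≠ 0)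
    {v : ℂ} (hv : v ∈ VoronoiCell τ) : v / τ ∈ VoronoiCell τ := by
  intro y hy
  have hτ := tau_ne_zero him
  have h := hv (τ * y) (Ztau_tau_mul hroot hy)
  have hrw : v / τ - y = (v - τ * y) / τ := by field_simp
  rw [hrw, norm_div, norm_div]
  gcongr

lemma V_div_pow (hroot : τ ^ 2 - (p : ℂ) * τ + (q : ℂ) = 0) (him : τ.im ≠ 0)
    (k : ℕ) {v : ℂ} (hv : v ∈ VoronoiCell τ) : v / τ ^ k ∈ VoronoiCell τ := by
  induction k with
  | zero => simpa using hv
  | succ k ih =>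
      have : v / τ ^ (k + 1) = (v / τ ^ k) / τ := by
        rw [div_div, pow_succ]
      rw [this]; exact V_div hroot him ih

/-- A minimal norm representative scaled by `τ^{-w}` lies in the Voronoi cell. -/
lemma minRep_div_mem (him : τ.im ≠ 0) {w : ℕ} {x : ℂ} (hx : MinNormRep τ w x) :
    x / τ ^ w ∈ VoronoiCell τ := by
  intro y hy
  have hτ : (τ : ℂ) ^ w ≠ 0 := pow_ne_zero _ (tau_ne_zero him)
  have h := hx.2.2 y hy
  have hrw : x / τ ^ w - y = (x - τ ^ w * y) / τ ^ w := by field_simp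
  rw [hrw, norm_div, norm_div]
  exact div_le_div_of_nonneg_right h (by positivity) |>.trans_eq rfl

end AuxLemmas2

section AuxLemmas3

variable {p q : ℤ} {τ : ℂ}

lemma interior_strict {u y : ℂ} (hu : u ∈ interior (VoronoiCell τ))
    (hy : y ∈ Ztau τ) (hy0 : y ≠ 0) : ‖u‖ < ‖u - y‖ := by
  obtain ⟨ε, hε, hball⟩ := Metric.isOpen_iff.mp isOpen_interior u hu
  have hyabs : 0 < ‖y‖ := norm_pos_iff.mpr hy0
  set δ : ℝ := ε / (2 * ‖y‖) with hδdef
  have hδ : 0 < δ := by positivity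
  have hu' : u + (δ : ℂ) * y ∈ VoronoiCell τ := by
    refine interior_subset (hball ?_)
    rw [Metric.mem_ball, dist_eq_norm]
    have : u + (δ : ℂ) * y - u = (δ : ℂ) * y := by ring
    rw [this]
    rw [norm_mul]
    simp only [Complex.norm_real, Real.norm_eq_abs, abs_of_pos hδ]
    rw [hδdef]
    rw [div_mul_eq_mul_div, mul_comm (2 : ℝ)]
    rw [div_lt_iff₀ (by positivity)]
    nlinarith
  have h := hu' y hy
  -- convert to normSq
  have h2 : Complex.normSq (u + (δ : ℂ) * y) ≤ Complex.normSq (u + (δ : ℂ) * y - y) := by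
    have := pow_le_pow_left₀ (norm_nonneg _) h 2
    rwa [Complex.sq_norm, Complex.sq_norm] at this
  suffices hs : Complex.normSq u < Complex.normSq (u - y) by
    rw [Complex.norm_def, Complex.norm_def]
    exact Real.sqrt_lt_sqrt (Complex.normSq_nonneg _) hs
  have hN : 0 < y.re ^ 2 + y.im ^ 2 := by
    have := Complex.normSq_pos.mpr hy0
    rw [Complex.normSq_apply] at this
    nlinarith
  simp only [Complex.normSq_apply, Complex.add_re, Complex.add_im, Complex.sub_re,
    Complex.sub_im, Complex.mul_re, Complex.mul_im, Complex.ofReal_re, Complex.ofReal_im] at h2 ⊢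
  nlinarith [mul_pos hδ hN, h2, hδ, hN]

lemma exists_valuation (hroot : τ ^ 2 - (p : ℂ) * τ + (q : ℂ) = 0) (him : τ.im ≠ 0)
    (hq2 : 2 ≤ q) :
    ∀ z ∈ Ztau τ, z ≠ 0 → ∃ (t : ℕ) (y : ℂ), y ∈ Ztau τ ∧ ¬ TauDvd τ y ∧ z = τ ^ t * y := by
  have hτ : τ ≠ 0 := tau_ne_zero him
  have hqτ : Complex.normSq τ = (q : ℝ) := by
    have := tau_normSq_eq hroot him
    rw [Complex.normSq_apply]; linear_combination this
  suffices H : ∀ k : ℕ, ∀ z ∈ Ztau τ, z ≠ 0 → Complex.normSq z ≤ (k : ℝ) →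
      ∃ (t : ℕ) (y : ℂ), y ∈ Ztau τ ∧ ¬ TauDvd τ y ∧ z = τ ^ t * y by
    intro z hz hz0
    obtain ⟨kk, hk⟩ := normSq_mem_int hroot him hz
    refine H kk.toNat z hz hz0 ?_
    have h0 : (0 : ℝ) ≤ (kk : ℝ) := hk ▸ Complex.normSq_nonneg z
    have : (0 : ℤ) ≤ kk := by exact_mod_cast h0
    rw [hk]
    exact_mod_cast le_of_eq (by rw [Int.toNat_of_nonneg this])
  intro k
  induction k with
  | zero =>
      intro z hz hz0 hle
      exact absurd hle (not_le.mpr (by simpa using Complex.normSq_pos.mpr hz0))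
  | succ k ih =>
      intro z hz hz0 hle
      by_cases hdvd : TauDvd τ z
      · obtain ⟨y, hyZ, rfl⟩ := hdvd
        have hy0 : y ≠ 0 := by rintro rfl; simp at hz0
        obtain ⟨ky, hky⟩ := normSq_mem_int hroot him hyZ
        have hypos : 0 < Complex.normSq y := Complex.normSq_pos.mpr hy0
        have h1 : (1 : ℝ) ≤ Complex.normSq y := by
          have : (0 : ℤ) < ky := by
            have : (0 : ℝ) < (ky : ℝ) := hky ▸ hypos
            exact_mod_cast this
          rw [hky]; exact_mod_cast this
        have hmul : Complex.normSq (τ * y) = (q : ℝ) * Complex.normSq y := by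
          rw [Complex.normSq_mul, hqτ]
        have hq2' : (2 : ℝ) ≤ (q : ℝ) := by exact_mod_cast hq2
        have h2 : Complex.normSq y ≤ (k : ℝ) := by
          have hk1 : (q : ℝ) * Complex.normSq y ≤ (k : ℝ) + 1 := by
            rw [← hmul]; push_cast at hle ⊢; linarith
          nlinarith
        obtain ⟨t, y', hy'Z, hy'nd, hy'eq⟩ := ih y hyZ hy0 h2
        exact ⟨t + 1, y', hy'Z, hy'nd, by rw [pow_succ', mul_assoc, ← hy'eq]⟩
      · exact ⟨0, z, hz, hdvd, by simp⟩

lemma mem_D_of_interior (hroot : τ ^ 2 - (p : ℂ) * τ + (q : ℂ) = 0) (him : τ.im ≠ 0)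
    {w : ℕ} (hw : 1 ≤ w) {D : Set ℂ} (hD : IsMinNormDigitSet τ w D)
    {x u : ℂ} (hx : x ∈ Ztau τ) (hnd : ¬ TauDvd τ x)
    (hu : u ∈ interior (VoronoiCell τ)) (hxu : x = τ ^ w * u) : x ∈ D := by
  have hτ : τ ≠ 0 := tau_ne_zero him
  obtain ⟨e, ⟨heD, y₃, hy₃Z, heq⟩, -⟩ := hD.2.2.2 x hx hnd
  by_cases hy0 : y₃ = 0
  · subst hy0
    have : x = e := by linear_combination heq
    rwa [this]
  · exfalso
    have he0 : e ≠ 0 := by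
      rintro rfl
      apply hnd
      obtain ⟨w', rfl⟩ : ∃ w', w = w' + 1 := ⟨w - 1, by omega⟩
      exact ⟨τ ^ w' * y₃, Ztau_pow_mul hroot w' hy₃Z, by
        rw [← mul_assoc, ← pow_succ']; linear_combination heq⟩
    have hmin := (hD.2.2.1 e heD he0).2.2 (-y₃) (Ztau_neg hy₃Z)
    have h1 : ‖e‖ ≤ ‖x‖ := by
      have hee : e - τ ^ w * (-y₃) = x := by linear_combination -heq
      rwa [hee] at hmin
    have h2 : ‖u‖ < ‖u - y₃‖ := interior_strict hu hy₃Z hy0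
    have h3 : ‖x‖ < ‖e‖ := by
      have he' : e = τ ^ w * (u - y₃) := by
        rw [mul_sub, ← hxu]; linear_combination -heq
      rw [hxu, he', norm_mul, norm_mul]
      exact mul_lt_mul_of_pos_left h2 (norm_pos_iff.mpr (pow_ne_zero w hτ))
    linarith

end AuxLemmas3

section AuxLemmas4

/-- Construct a (at most) two-digit `w`-NAF expansion with digits at positions
`k₀` and `k₀ + (w + s)`. -/
lemma twoDigit (τ : ℂ) {D : Set ℂ} (hD0 : (0 : ℂ) ∈ D) {e f : ℂ} (he : e ∈ D) (hf : f ∈ D)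
    (w k₀ s : ℕ) (hw : 0 < w) :
    ∃ η : ℕ →₀ ℂ, IsExpansion D η ∧ IsWNAF w η ∧
      evalue τ η = e * τ ^ k₀ + f * τ ^ (k₀ + (w + s)) ∧ eweight η ≤ 2 := by
  set k₁ := k₀ + (w + s) with hk₁
  have h01 : k₀ ≠ k₁ := by omega
  set η : ℕ →₀ ℂ := Finsupp.single k₀ e + Finsupp.single k₁ f with hη
  have happ0 : η k₀ = e := by
    rw [hη, Finsupp.add_apply, Finsupp.single_eq_same, Finsupp.single_eq_of_ne' h01.symm,
      add_zero]
  have happ1 : η k₁ = f := by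
    rw [hη, Finsupp.add_apply, Finsupp.single_eq_of_ne' h01, Finsupp.single_eq_same, zero_add]
  have happ : ∀ i, i ≠ k₀ → i ≠ k₁ → η i = 0 := by
    intro i h0 h1
    rw [hη, Finsupp.add_apply, Finsupp.single_eq_of_ne' (Ne.symm h0),
      Finsupp.single_eq_of_ne' (Ne.symm h1), add_zero]
  refine ⟨η, ?_, ?_, ?_, ?_⟩
  · intro i
    rcases eq_or_ne i k₀ with rfl | h0
    · rw [happ0]; exact he
    rcases eq_or_ne i k₁ with rfl | h1
    · rw [happ1]; exact hf
    · rw [happ i h0 h1]; exact hD0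
  · intro m n hmn hm hn
    have hm' : m = k₀ ∨ m = k₁ := by
      by_contra h; push_neg at h; exact hm (happ m h.1 h.2)
    have hn' : n = k₀ ∨ n = k₁ := by
      by_contra h; push_neg at h; exact hn (happ n h.1 h.2)
    have habs : (w : ℤ) ≤ |(k₀ : ℤ) - (k₁ : ℤ)| := by
      have heq : ((k₀ : ℤ) - (k₁ : ℤ)) = -((w : ℤ) + s) := by rw [hk₁]; push_cast; ring
      rw [heq, abs_neg, _root_.abs_of_nonneg (by positivity : (0:ℤ) ≤ (w : ℤ) + s)]
      omega
    rcases hm' with rfl | rfl <;> rcases hn' with rfl | rfl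
    · exact absurd rfl hmn
    · exact habs
    · rw [abs_sub_comm]; exact habs
    · exact absurd rfl hmn
  · rw [hη]
    unfold evalue
    rw [Finsupp.sum_add_index' (by intro a; simp) (by intro a b c; ring)]
    rw [Finsupp.sum_single_index (by simp), Finsupp.sum_single_index (by simp)]
  · unfold eweight
    calc η.support.card
        ≤ ((Finsupp.single k₀ e).support ∪ (Finsupp.single k₁ f).support).card := by
          rw [hη]; exact Finset.card_le_card Finsupp.support_add
      _ ≤ (Finsupp.single k₀ e).support.card + (Finsupp.single k₁ f).support.card :=
          Finset.card_union_le _ _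
      _ ≤ 1 + 1 := by
          gcongr <;>
            simpa using Finset.card_le_card (Finsupp.support_single_subset)
      _ ≤ 2 := by omega

end AuxLemmas4

section MainLemma

lemma main_case (p q : ℤ) (τ : ℂ)
    (hpq : p ^ 2 < 4 * q)
    (hroot : τ ^ 2 - (p : ℂ) * τ + (q : ℂ) = 0)
    (him : τ.im ≠ 0)
    (w : ℕ) (hw : 2 ≤ w)
    (D : Set ℂ) (hD : IsMinNormDigitSet τ w D)
    (hincl : ∀ v₁ ∈ VoronoiCell τ, ∀ v₂ ∈ VoronoiCell τ, ∀ v₃ ∈ VoronoiCell τ,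
      ∃ u ∈ interior (VoronoiCell τ), τ ^ (w - 1) * v₁ + v₂ + v₃ = τ ^ w * u)
    {c d : ℂ} (hc : c ∈ D) (hd : d ∈ D) (hc0 : c ≠ 0) (hd0 : d ≠ 0)
    (m n : ℕ) (hnm : n ≤ m) :
    ∃ η : ℕ →₀ ℂ, IsExpansion D η ∧ IsWNAF w η ∧
      evalue τ η = τ ^ m * c + τ ^ n * d ∧ eweight η ≤ 2 := by
  have hτ : τ ≠ 0 := tau_ne_zero him
  have hD0 : (0 : ℂ) ∈ D := hD.2.1
  have hcZ : c ∈ Ztau τ := hD.1 hc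
  have hdZ : d ∈ Ztau τ := hD.1 hd
  have hcmin : MinNormRep τ w c := hD.2.2.1 c hc hc0
  have hdmin : MinNormRep τ w d := hD.2.2.1 d hd hd0
  -- q ≥ 2
  have hq1 : 1 ≤ q := by nlinarith [sq_nonneg p]
  have hq2 : 2 ≤ q := by
    by_contra h
    push_neg at h
    have hq1' : q = 1 := by omega
    apply hcmin.2.1
    obtain ⟨a, b, rfl⟩ := hcZ
    refine ⟨((p * a + q * b : ℤ) : ℂ) + ((-a : ℤ) : ℂ) * τ, Ztau_mem _ _, ?_⟩
    have hqC : ((q : ℤ) : ℂ) = 1 := by rw [hq1']; norm_num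
    push_cast
    linear_combination (a : ℂ) * hroot + (-(a : ℂ) - (b : ℂ) * τ) * hqC
  set j := m - n with hj
  have hm : m = n + j := by omega
  rcases le_or_gt w j with hwj | hwj
  · -- far apart: digits at n and m directly
    obtain ⟨η, h1, h2, h3, h4⟩ := twoDigit τ hD0 hd hc w n (j - w) (by omega)
    refine ⟨η, h1, h2, ?_, h4⟩
    rw [h3, show n + (w + (j - w)) = m by omega]
    ring
  · -- close: analyze z = τ^j c + d
    set z := τ ^ j * c + d with hzdef
    have hzZ : z ∈ Ztau τ := Ztau_add (Ztau_pow_mul hroot j hcZ) hdZ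
    by_cases hz0 : z = 0
    · obtain ⟨η, h1, h2, h3, h4⟩ := twoDigit τ hD0 (e := 0) (f := 0) hD0 hD0 w 0 0 (by omega)
      refine ⟨η, h1, h2, ?_, h4⟩
      rw [h3, hm]
      linear_combination (τ ^ n : ℂ) * hzdef - (τ ^ n : ℂ) * hz0
    · obtain ⟨t, z₁, hz₁Z, hz₁nd, hzt⟩ := exists_valuation hroot him hq2 z hzZ hz0
      obtain ⟨e, ⟨heD, y, hyZ, heq⟩, -⟩ := hD.2.2.2 z₁ hz₁Z hz₁nd
      by_cases hy0 : y = 0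
      · -- weight one: z = τ^t e
        obtain ⟨η, h1, h2, h3, h4⟩ := twoDigit τ hD0 (f := 0) heD hD0 w (n + t) 0 (by omega)
        refine ⟨η, h1, h2, ?_, h4⟩
        rw [h3, hm]
        linear_combination (τ ^ n : ℂ) * hzdef - (τ ^ n : ℂ) * hzt -
          (τ ^ (n + t) : ℂ) * heq - (τ ^ (n + t + w) : ℂ) * hy0
      · -- weight two
        obtain ⟨s, y'', hy''Z, hy''nd, hys⟩ := exists_valuation hroot him hq2 y hyZ hy0
        have he0 : e ≠ 0 := by
          rintro rfl
          apply hz₁nd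
          obtain ⟨w', rfl⟩ : ∃ w', w = w' + 1 := ⟨w - 1, by omega⟩
          exact ⟨τ ^ w' * y, Ztau_pow_mul hroot w' hyZ, by
            rw [← mul_assoc, ← pow_succ']; linear_combination heq⟩
        have hcV : c / τ ^ w ∈ VoronoiCell τ := minRep_div_mem him hcmin
        have hdV : d / τ ^ w ∈ VoronoiCell τ := minRep_div_mem him hdmin
        have heV : e / τ ^ w ∈ VoronoiCell τ := minRep_div_mem him (hD.2.2.1 e heD he0)
        obtain ⟨k, hk⟩ : ∃ k, w - 1 = j + k := ⟨w - 1 - j, by omega⟩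
        set v₁ : ℂ := c / τ ^ (w + (t + s + k)) with hv₁def
        set v₂ : ℂ := d / τ ^ (w + (t + s)) with hv₂def
        set v₃ : ℂ := -(e / τ ^ (w + s)) with hv₃def
        have hv₁ : v₁ ∈ VoronoiCell τ := by
          rw [hv₁def, pow_add, ← div_div]
          exact V_div_pow hroot him _ hcV
        have hv₂ : v₂ ∈ VoronoiCell τ := by
          rw [hv₂def, pow_add, ← div_div]
          exact V_div_pow hroot him _ hdV
        have hv₃ : v₃ ∈ VoronoiCell τ := by
          rw [hv₃def, pow_add, ← div_div]
          exact V_neg (V_div_pow hroot him _ heV)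
        have hkey : τ ^ j * c + d = τ ^ t * e + τ ^ (t + w + s) * y'' := by
          linear_combination -hzdef + hzt + (τ ^ t : ℂ) * heq + (τ ^ (t + w) : ℂ) * hys
        have hc1 : c = τ ^ (w + (t + s + k)) * v₁ := by
          rw [hv₁def]; field_simp
        have hd1 : d = τ ^ (w + (t + s)) * v₂ := by
          rw [hv₂def]; field_simp
        have he1 : e = -(τ ^ (w + s) * v₃) := by
          rw [hv₃def]; field_simp
        obtain ⟨u, huI, hueq⟩ := hincl v₁ hv₁ v₂ hv₂ v₃ hv₃
        have hkey2 : τ ^ (w - 1) * v₁ + v₂ + v₃ = y'' := by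
          rw [hk]
          apply mul_left_cancel₀ (pow_ne_zero (w + (t + s)) hτ)
          linear_combination hkey - (τ ^ j : ℂ) * hc1 - hd1 + (τ ^ t : ℂ) * he1
        have hy''u : y'' = τ ^ w * u := by rw [← hkey2, hueq]
        have hy''D : y'' ∈ D :=
          mem_D_of_interior hroot him (by omega) hD hy''Z hy''nd huI hy''u
        obtain ⟨η, h1, h2, h3, h4⟩ := twoDigit τ hD0 heD hy''D w (n + t) s (by omega)
        refine ⟨η, h1, h2, ?_, h4⟩
        rw [h3, hm]
        linear_combination (τ ^ n : ℂ) * hzdef - (τ ^ n : ℂ) * hzt -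
          (τ ^ (n + t) : ℂ) * heq - (τ ^ (n + t + w) : ℂ) * hys

end MainLemma


/-- If `τ^{w-1}·V + V + V ⊆ τ^w·int(V)`, then the minimal norm representatives
digit set modulo `τ^w` is `w`-subadditive. -/
theorem wsubadditive_of_voronoi_inclusion (p q : ℤ) (τ : ℂ)
    (hpq : p ^ 2 < 4 * q)
    (hroot : τ ^ 2 - (p : ℂ) * τ + (q : ℂ) = 0)
    (him : τ.im ≠ 0)
    (w : ℕ) (hw : 2 ≤ w)
    (D : Set ℂ) (hD : IsMinNormDigitSet τ w D)
    (hincl : ∀ v₁ ∈ VoronoiCell τ, ∀ v₂ ∈ VoronoiCell τ, ∀ v₃ ∈ VoronoiCell τ,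
      ∃ u ∈ interior (VoronoiCell τ), τ ^ (w - 1) * v₁ + v₂ + v₃ = τ ^ w * u) :
    WSubadditive τ w D := by
  intro c hc d hd hc0 hd0 m n
  rcases le_total n m with h | h
  · exact main_case p q τ hpq hroot him w hw D hD hincl hc hd hc0 hd0 m n h
  · obtain ⟨η, h1, h2, h3, h4⟩ :=
      main_case p q τ hpq hroot him w hw D hD hincl hd hc hd0 hc0 n m h
    exact ⟨η, h1, h2, by rw [h3]; ring, h4⟩
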